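/- Let H = p₁² + p₂² + a·q₁^(-2) + b·q₂^(-2/5) on q₁ > 0, q₂ > 0, and let Y₆ = p₂⁴(p₁q₂ - p₂q₁)² + (a/q₁²)(q₂²p₂⁴ + (11b/3)q₂^(8/5)p₂² + (64b²/9)q₂^(6/5)) + b³q₁²·q₂^(-6/5) + (b²/9)(64p₁²q₂² - 90p₁p₂q₁q₂ + 27p₂²q₁²)·q₂^(-4/5) + (b/3)p₂²(11p₁q₂ - 9p₂q₁)(p₁q₂ - p₂q₁)·q₂^(-2/5). Then {H, Y₆} = 0. -/

import Mathlib

noncomputable def pb (F G : ℝ → ℝ → ℝ → ℝ → ℝ) (q1 q2 p1 p2 : ℝ) : ℝ :=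
  deriv (fun x => F x q2 p1 p2) q1 * deriv (fun x => G q1 q2 x p2) p1
  + deriv (fun x => F q1 x p1 p2) q2 * deriv (fun x => G q1 q2 p1 x) p2
  - deriv (fun x => F q1 q2 x p2) p1 * deriv (fun x => G x q2 p1 p2) q1
  - deriv (fun x => F q1 q2 p1 x) p2 * deriv (fun x => G q1 x p1 p2) q2

noncomputable def H (a b : ℝ) (q1 q2 p1 p2 : ℝ) : ℝ :=
  p1 ^ 2 + p2 ^ 2 + a * q1 ^ (-(2 : ℝ)) + b * q2 ^ (-(2 : ℝ) / 5)

noncomputable def Y6 (a b : ℝ) (q1 q2 p1 p2 : ℝ) : ℝ :=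
  p2 ^ 4 * (p1 * q2 - p2 * q1) ^ 2
  + (a / q1 ^ 2) * (q2 ^ 2 * p2 ^ 4 + (11 * b / 3) * q2 ^ ((8 : ℝ) / 5) * p2 ^ 2
      + (64 * b ^ 2 / 9) * q2 ^ ((6 : ℝ) / 5))
  + b ^ 3 * q1 ^ 2 * q2 ^ (-(6 : ℝ) / 5)
  + (b ^ 2 / 9) * (64 * p1 ^ 2 * q2 ^ 2 - 90 * p1 * p2 * q1 * q2 + 27 * p2 ^ 2 * q1 ^ 2)
      * q2 ^ (-(4 : ℝ) / 5)
  + (b / 3) * p2 ^ 2 * (11 * p1 * q2 - 9 * p2 * q1) * (p1 * q2 - p2 * q1)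
      * q2 ^ (-(2 : ℝ) / 5)

set_option maxHeartbeats 2000000 in
theorem stmt9 (a b : ℝ) (q1 q2 p1 p2 : ℝ) (hq1 : 0 < q1) (hq2 : 0 < q2) :
    pb (H a b) (Y6 a b) q1 q2 p1 p2 = 0 := by
  -- derivatives of H
  have hHq1 : HasDerivAt (fun x => H a b x q2 p1 p2)
      (a * (-2 * q1 ^ (-(2:ℝ) - 1))) q1 := by
    simp only [H]
    have h := (((hasDerivAt_const q1 (p1^2)).add (hasDerivAt_const q1 (p2^2))).add
      ((Real.hasDerivAt_rpow_const (p := -(2:ℝ)) (Or.inl hq1.ne')).const_mul a)).add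
      (hasDerivAt_const q1 (b * q2 ^ (-(2:ℝ)/5)))
    exact h.congr_deriv (by ring)
  have hHq2 : HasDerivAt (fun x => H a b q1 x p1 p2)
      (b * (-(2:ℝ)/5 * q2 ^ (-(2:ℝ)/5 - 1))) q2 := by
    simp only [H]
    have h := (((hasDerivAt_const q2 (p1^2)).add (hasDerivAt_const q2 (p2^2))).add
      (hasDerivAt_const q2 (a * q1 ^ (-(2:ℝ))))).add
      ((Real.hasDerivAt_rpow_const (p := -(2:ℝ)/5) (Or.inl hq2.ne')).const_mul b)
    exact h.congr_deriv (by ring)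
  have hHp1 : HasDerivAt (fun x => H a b q1 q2 x p2) (2 * p1) p1 := by
    simp only [H]
    have h := (((hasDerivAt_pow 2 p1).add (hasDerivAt_const p1 (p2^2))).add
      (hasDerivAt_const p1 (a * q1 ^ (-(2:ℝ))))).add
      (hasDerivAt_const p1 (b * q2 ^ (-(2:ℝ)/5)))
    exact h.congr_deriv (by push_cast; ring)
  have hHp2 : HasDerivAt (fun x => H a b q1 q2 p1 x) (2 * p2) p2 := by
    simp only [H]
    have h := (((hasDerivAt_const p2 (p1^2)).add (hasDerivAt_pow 2 p2)).add
      (hasDerivAt_const p2 (a * q1 ^ (-(2:ℝ))))).add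
      (hasDerivAt_const p2 (b * q2 ^ (-(2:ℝ)/5)))
    exact h.congr_deriv (by push_cast; ring)
  -- derivative of Y6 in p1
  have hYp1 : HasDerivAt (fun x => Y6 a b q1 q2 x p2)
      (p2 ^ 4 * (2 * (p1 * q2 - p2 * q1) * q2)
       + (b ^ 2 / 9) * (128 * p1 * q2 ^ 2 - 90 * p2 * q1 * q2) * q2 ^ (-(4 : ℝ) / 5)
       + (b / 3) * p2 ^ 2 * (11 * q2 * (p1 * q2 - p2 * q1)
            + (11 * p1 * q2 - 9 * p2 * q1) * q2) * q2 ^ (-(2 : ℝ) / 5)) p1 := by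
    simp only [Y6]
    have T1 := ((((hasDerivAt_id' p1).mul_const q2).sub_const (p2 * q1)).pow 2).const_mul (p2 ^ 4)
    have T4 := (((((hasDerivAt_pow 2 p1).const_mul 64).mul_const (q2 ^ 2)).sub
        ((((hasDerivAt_id' p1).const_mul 90).mul_const p2).mul_const q1 |>.mul_const q2)).add_const
        (27 * p2 ^ 2 * q1 ^ 2)).const_mul (b ^ 2 / 9) |>.mul_const (q2 ^ (-(4 : ℝ) / 5))
    have T5 := (((((hasDerivAt_id' p1).const_mul 11).mul_const q2).sub_const (9 * p2 * q1)).const_mul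
        ((b / 3) * p2 ^ 2)).mul (((hasDerivAt_id' p1).mul_const q2).sub_const (p2 * q1))
        |>.mul_const (q2 ^ (-(2 : ℝ) / 5))
    exact ((((T1.add_const _).add_const _).add T4).add T5).congr_deriv (by push_cast; ring)
  -- derivative of Y6 in p2
  have hYp2 : HasDerivAt (fun x => Y6 a b q1 q2 p1 x)
      (4 * p2 ^ 3 * (p1 * q2 - p2 * q1) ^ 2 - 2 * p2 ^ 4 * (p1 * q2 - p2 * q1) * q1
       + (a / q1 ^ 2) * (4 * q2 ^ 2 * p2 ^ 3 + 2 * (11 * b / 3) * q2 ^ ((8 : ℝ) / 5) * p2)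
       + (b ^ 2 / 9) * (54 * p2 * q1 ^ 2 - 90 * p1 * q1 * q2) * q2 ^ (-(4 : ℝ) / 5)
       + (b / 3) * (2 * p2 * (11 * p1 * q2 - 9 * p2 * q1) * (p1 * q2 - p2 * q1)
            - 9 * p2 ^ 2 * q1 * (p1 * q2 - p2 * q1)
            - p2 ^ 2 * (11 * p1 * q2 - 9 * p2 * q1) * q1) * q2 ^ (-(2 : ℝ) / 5)) p2 := by
    simp only [Y6]
    have T1 := (hasDerivAt_pow 4 p2).mul
      ((((hasDerivAt_id' p2).mul_const q1).const_sub (p1 * q2)).pow 2)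
    have T2 := (((hasDerivAt_pow 4 p2).const_mul (q2 ^ 2)).add
        ((hasDerivAt_pow 2 p2).const_mul ((11 * b / 3) * q2 ^ ((8 : ℝ) / 5)))).add_const
        ((64 * b ^ 2 / 9) * q2 ^ ((6 : ℝ) / 5)) |>.const_mul (a / q1 ^ 2)
    have T4 := (((hasDerivAt_const p2 (64 * p1 ^ 2 * q2 ^ 2)).sub
        ((((hasDerivAt_id' p2).const_mul (90 * p1)).mul_const q1).mul_const q2)).add
        (((hasDerivAt_pow 2 p2).const_mul 27).mul_const (q1 ^ 2))).const_mul (b ^ 2 / 9)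
        |>.mul_const (q2 ^ (-(4 : ℝ) / 5))
    have T5 := ((((hasDerivAt_pow 2 p2).const_mul (b / 3)).mul
        ((((hasDerivAt_id' p2).const_mul 9).mul_const q1).const_sub (11 * p1 * q2))).mul
        (((hasDerivAt_id' p2).mul_const q1).const_sub (p1 * q2)))
        |>.mul_const (q2 ^ (-(2 : ℝ) / 5))
    exact ((((T1.add T2).add_const _).add T4).add T5).congr_deriv (by simp only [Pi.pow_apply, Pi.mul_apply, Pi.sub_apply, Pi.add_apply]; push_cast; ring)
  -- derivative of Y6 in q1
  have hYq1 : HasDerivAt (fun x => Y6 a b x q2 p1 p2)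
      (-2 * p2 ^ 5 * (p1 * q2 - p2 * q1)
       + (-(2 * a) / q1 ^ 3) * (q2 ^ 2 * p2 ^ 4 + (11 * b / 3) * q2 ^ ((8 : ℝ) / 5) * p2 ^ 2
            + (64 * b ^ 2 / 9) * q2 ^ ((6 : ℝ) / 5))
       + 2 * b ^ 3 * q1 * q2 ^ (-(6 : ℝ) / 5)
       + (b ^ 2 / 9) * (54 * p2 ^ 2 * q1 - 90 * p1 * p2 * q2) * q2 ^ (-(4 : ℝ) / 5)
       + (b / 3) * p2 ^ 2 * (-9 * p2 * (p1 * q2 - p2 * q1)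
            - (11 * p1 * q2 - 9 * p2 * q1) * p2) * q2 ^ (-(2 : ℝ) / 5)) q1 := by
    simp only [Y6]
    have T1 := ((((hasDerivAt_id' q1).const_mul p2).const_sub (p1 * q2)).pow 2).const_mul (p2 ^ 4)
    have T2 := ((hasDerivAt_const q1 a).div (hasDerivAt_pow 2 q1)
        (pow_ne_zero 2 hq1.ne')).mul_const
        (q2 ^ 2 * p2 ^ 4 + (11 * b / 3) * q2 ^ ((8 : ℝ) / 5) * p2 ^ 2
            + (64 * b ^ 2 / 9) * q2 ^ ((6 : ℝ) / 5))
    have T3 := ((hasDerivAt_pow 2 q1).const_mul (b ^ 3)).mul_const (q2 ^ (-(6 : ℝ) / 5))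
    have T4 := (((((hasDerivAt_id' q1).const_mul (90 * p1 * p2)).mul_const q2).const_sub
        (64 * p1 ^ 2 * q2 ^ 2)).add ((hasDerivAt_pow 2 q1).const_mul (27 * p2 ^ 2))).const_mul
        (b ^ 2 / 9) |>.mul_const (q2 ^ (-(4 : ℝ) / 5))
    have T5 := (((((hasDerivAt_id' q1).const_mul (9 * p2)).const_sub (11 * p1 * q2)).const_mul
        ((b / 3) * p2 ^ 2)).mul (((hasDerivAt_id' q1).const_mul p2).const_sub (p1 * q2)))
        |>.mul_const (q2 ^ (-(2 : ℝ) / 5))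
    refine ((((T1.add T2).add T3).add T4).add T5).congr_deriv ?_
    field_simp
    ring
  -- derivative of Y6 in q2
  have hYq2 : HasDerivAt (fun x => Y6 a b q1 x p1 p2)
      (p2 ^ 4 * (2 * (p1 * q2 - p2 * q1) * p1)
       + (a / q1 ^ 2) * (2 * q2 * p2 ^ 4
            + (11 * b / 3) * ((8:ℝ)/5 * q2 ^ ((8:ℝ)/5 - 1)) * p2 ^ 2
            + (64 * b ^ 2 / 9) * ((6:ℝ)/5 * q2 ^ ((6:ℝ)/5 - 1)))
       + b ^ 3 * q1 ^ 2 * (-(6:ℝ)/5 * q2 ^ (-(6:ℝ)/5 - 1))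
       + (b ^ 2 / 9) * ((128 * p1 ^ 2 * q2 - 90 * p1 * p2 * q1) * q2 ^ (-(4 : ℝ) / 5)
            + (64 * p1 ^ 2 * q2 ^ 2 - 90 * p1 * p2 * q1 * q2 + 27 * p2 ^ 2 * q1 ^ 2)
              * (-(4:ℝ)/5 * q2 ^ (-(4:ℝ)/5 - 1)))
       + (b / 3) * p2 ^ 2 * ((11 * p1 * (p1 * q2 - p2 * q1)
              + (11 * p1 * q2 - 9 * p2 * q1) * p1) * q2 ^ (-(2 : ℝ) / 5)
            + (11 * p1 * q2 - 9 * p2 * q1) * (p1 * q2 - p2 * q1)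
              * (-(2:ℝ)/5 * q2 ^ (-(2:ℝ)/5 - 1)))) q2 := by
    simp only [Y6]
    have T1 := ((((hasDerivAt_id' q2).const_mul p1).sub_const (p2 * q1)).pow 2).const_mul (p2 ^ 4)
    have T2 := ((((hasDerivAt_pow 2 q2).mul_const (p2 ^ 4)).add
        (((Real.hasDerivAt_rpow_const (p := (8:ℝ)/5) (Or.inl hq2.ne')).const_mul
          (11 * b / 3)).mul_const (p2 ^ 2))).add
        ((Real.hasDerivAt_rpow_const (p := (6:ℝ)/5) (Or.inl hq2.ne')).const_mul
          (64 * b ^ 2 / 9))).const_mul (a / q1 ^ 2)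
    have T3 := (Real.hasDerivAt_rpow_const (p := -(6:ℝ)/5) (Or.inl hq2.ne')).const_mul
        (b ^ 3 * q1 ^ 2)
    have T4 := ((((((hasDerivAt_pow 2 q2).const_mul (64 * p1 ^ 2)).sub
        ((hasDerivAt_id' q2).const_mul (90 * p1 * p2 * q1))).add_const
        (27 * p2 ^ 2 * q1 ^ 2)).const_mul (b ^ 2 / 9)).mul
        (Real.hasDerivAt_rpow_const (p := -(4:ℝ)/5) (Or.inl hq2.ne')))
    have T5 := (((((hasDerivAt_id' q2).const_mul (11 * p1)).sub_const (9 * p2 * q1)).const_mul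
        ((b / 3) * p2 ^ 2)).mul (((hasDerivAt_id' q2).const_mul p1).sub_const (p2 * q1))).mul
        (Real.hasDerivAt_rpow_const (p := -(2:ℝ)/5) (Or.inl hq2.ne'))
    exact ((((T1.add T2).add T3).add T4).add T5).congr_deriv (by simp only [Pi.pow_apply, Pi.mul_apply, Pi.sub_apply, Pi.add_apply]; push_cast; ring)
  simp only [pb, hHq1.deriv, hHq2.deriv, hHp1.deriv, hHp2.deriv,
    hYp1.deriv, hYp2.deriv, hYq1.deriv, hYq2.deriv]
  have key : ∀ (c : ℝ) (n : ℕ), c = n / 5 → q2 ^ c = (q2 ^ ((1:ℝ)/5)) ^ n := by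
    intro c n h
    rw [h, show ((n:ℝ))/5 = (1/5) * n by ring, Real.rpow_mul hq2.le, Real.rpow_natCast]
  have keyneg : ∀ (c : ℝ) (n : ℕ), c = -((n:ℝ) / 5) → q2 ^ c = ((q2 ^ ((1:ℝ)/5)) ^ n)⁻¹ := by
    intro c n h
    rw [h, Real.rpow_neg hq2.le, key _ n rfl]
  have hu : 0 < q2 ^ ((1:ℝ)/5) := Real.rpow_pos_of_pos hq2 _
  set u := q2 ^ ((1:ℝ)/5) with hudef
  have hq2u : q2 = u ^ 5 := by
    have h := key 1 5 (by norm_num)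
    rwa [Real.rpow_one] at h
  have hq13 : q1 ^ (-(2:ℝ) - 1) = (q1 ^ 3)⁻¹ := by
    rw [show (-(2:ℝ) - 1) = -((3:ℕ):ℝ) by norm_num, Real.rpow_neg hq1.le, Real.rpow_natCast]
  rw [hq13, key ((8:ℝ)/5) 8 (by norm_num), key ((6:ℝ)/5) 6 (by norm_num),
      keyneg (-(6:ℝ)/5) 6 (by norm_num), keyneg (-(4:ℝ)/5) 4 (by norm_num),
      keyneg (-(2:ℝ)/5) 2 (by norm_num),
      key ((8:ℝ)/5 - 1) 3 (by norm_num), key ((6:ℝ)/5 - 1) 1 (by norm_num),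
      keyneg (-(6:ℝ)/5 - 1) 11 (by norm_num), keyneg (-(4:ℝ)/5 - 1) 9 (by norm_num),
      keyneg (-(2:ℝ)/5 - 1) 7 (by norm_num), hq2u]
  have hu0 : u ≠ 0 := hu.ne'
  field_simp
  ring
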